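/- Let G be a pseudocentral group, i.e. P(G) = G. Then the commutator subgroup ⁅G,G⁆ is finite if and only if the quotient G/Z(G) of G by its centre is finite. (The nontrivial direction, a converse of Schur's theorem for pseudocentral groups: if G is pseudocentral and ⁅G,G⁆ is finite, then G/Z(G) is finite.) -/

import Mathlib

/-- The pseudocentre of a group `G`: the intersection of the normal closures of the
centralizers of the elements of `G`. -/
def P (G : Type*) [Group G] : Subgroup G :=
  ⨅ g : G, Subgroup.normalClosure ↑(Subgroup.centralizer {g})

section Aux

open Subgroup
open commutatorElement

variable {G : Type*} [Group G]

/-- Any subgroup containing the commutator subgroup is normal. -/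
lemma normal_of_commutator_le' {H : Subgroup G} (hH : commutator G ≤ H) : H.Normal := by
  constructor
  intro n hn g
  have hc : ⁅g, n⁆ ∈ H := hH (commutator_mem_commutator (mem_top g) (mem_top n))
  have : g * n * g⁻¹ = ⁅g, n⁆ * n := by
    simp [commutatorElement_def, mul_assoc]
  rw [this]
  exact H.mul_mem hc hn

/-- In a pseudocentral group, `G = C_G(g) * [G,G]` for every `g`. -/
lemma decomp_of_pseudocentral (h : P G = ⊤) (g x : G) :
    ∃ c ∈ centralizer {g}, ∃ d ∈ commutator G, x = c * d := by
  have hN : (centralizer {g} ⊔ commutator G).Normal :=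
    normal_of_commutator_le' le_sup_right
  have hx : x ∈ centralizer {g} ⊔ commutator G := by
    have h1 : x ∈ P G := h ▸ mem_top x
    simp only [P, Subgroup.mem_iInf] at h1
    exact Subgroup.normalClosure_le_normal
      (SetLike.coe_subset_coe.mpr (le_sup_left : centralizer {g} ≤ _)) (h1 g)
  rw [← SetLike.mem_coe, Subgroup.mul_normal] at hx
  obtain ⟨c, hc, d, hd, rfl⟩ := hx
  exact ⟨c, hc, d, hd, rfl⟩

/-- In a pseudocentral group, the centralizer of the commutator subgroup is abelian. -/
lemma centralizer_commutator_comm (h : P G = ⊤) {x g : G}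
    (hx : x ∈ centralizer (commutator G : Set G))
    (hg : g ∈ centralizer (commutator G : Set G)) : g * x = x * g := by
  obtain ⟨c, hc, d, hd, rfl⟩ := decomp_of_pseudocentral h g x
  have hdg : d * g = g * d := (mem_centralizer_iff.mp hg) d hd
  have hcg : g * c = c * g := (mem_centralizer_iff.mp hc) g (Set.mem_singleton g)
  calc g * (c * d) = (g * c) * d := by rw [mul_assoc]
    _ = c * (g * d) := by rw [hcg, mul_assoc]
    _ = c * (d * g) := by rw [hdg]
    _ = (c * d) * g := by rw [mul_assoc]

/-- If the commutator subgroup is finite, every centralizer of a single element has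
finite index. -/
lemma finiteIndex_centralizer_singleton [Finite (commutator G)] (g : G) :
    (centralizer ({g} : Set G)).FiniteIndex := by
  have hinj : Function.Injective
      (fun q : G ⧸ centralizer ({g} : Set G) =>
        (⟨⁅q.out, g⁆, commutator_mem_commutator (mem_top _) (mem_top _)⟩ : commutator G)) := by
    intro q1 q2 hq
    simp only [Subtype.mk.injEq, commutatorElement_def] at hq
    have hce : q1.out⁻¹ * q2.out ∈ centralizer ({g} : Set G) := by
      rw [mem_centralizer_iff]
      rintro h rfl
      -- from q1.out * g * q1.out⁻¹ = q2.out * g * q2.out⁻¹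
      have key : q1.out * h * q1.out⁻¹ = q2.out * h * q2.out⁻¹ := by
        have := congrArg (· * h) hq
        simpa [mul_assoc] using this
      have := congrArg (fun z => q1.out⁻¹ * z * q2.out) key
      simpa [mul_assoc] using this
    calc q1 = ↑q1.out := (QuotientGroup.out_eq' q1).symm
      _ = ↑q2.out := by rw [QuotientGroup.eq]; exact hce
      _ = q2 := QuotientGroup.out_eq' q2
  haveI : Finite (G ⧸ centralizer ({g} : Set G)) := Finite.of_injective _ hinj
  exact Subgroup.finiteIndex_of_finite_quotient

/-- The centralizer of the (finite) commutator subgroup has finite index. -/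
lemma finiteIndex_centralizer_commutator [Finite (commutator G)] :
    (centralizer (commutator G : Set G)).FiniteIndex := by
  have heq : centralizer (commutator G : Set G)
      = ⨅ d : commutator G, centralizer ({(d : G)} : Set G) := by
    apply le_antisymm
    · refine le_iInf fun d => ?_
      intro x hx
      rw [mem_centralizer_iff] at hx ⊢
      rintro h rfl
      exact hx d d.2
    · intro x hx
      rw [mem_centralizer_iff]
      intro d hd
      have := (mem_iInf.mp hx) ⟨d, hd⟩
      exact (mem_centralizer_iff.mp this) d (Set.mem_singleton _)
  rw [heq]
  exact Subgroup.finiteIndex_iInf fun d => finiteIndex_centralizer_singleton (d : G)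

lemma center_finiteIndex_of_pseudocentral (h : P G = ⊤) [Finite (commutator G)] :
    (Subgroup.center G).FiniteIndex := by
  set K := centralizer (commutator G : Set G) with hK
  haveI hKfi : K.FiniteIndex := finiteIndex_centralizer_commutator
  haveI : Finite (G ⧸ K) := K.finite_quotient_of_finiteIndex
  set Z : Subgroup G := K ⊓ ⨅ q : G ⧸ K, centralizer ({q.out} : Set G) with hZ
  haveI h2 : (⨅ q : G ⧸ K, centralizer ({q.out} : Set G)).FiniteIndex :=
    Subgroup.finiteIndex_iInf fun q => finiteIndex_centralizer_singleton q.out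
  haveI hZfi : Z.FiniteIndex := by
    rw [hZ]; infer_instance
  have hZle : Z ≤ Subgroup.center G := by
    intro x hx
    rw [Subgroup.mem_center_iff]
    intro g
    obtain ⟨hxK, hxI⟩ := hZ ▸ hx
    set q : G ⧸ K := (g : G ⧸ K) with hq
    have hk : q.out⁻¹ * g ∈ K := by
      rw [← QuotientGroup.eq]
      exact QuotientGroup.out_eq' q
    have hcomm1 : q.out * x = x * q.out :=
      (mem_centralizer_iff.mp ((mem_iInf.mp hxI) q)) q.out (Set.mem_singleton _)
    have hcomm2 : (q.out⁻¹ * g) * x = x * (q.out⁻¹ * g) :=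
      centralizer_commutator_comm h hxK hk
    have : g = q.out * (q.out⁻¹ * g) := by group
    rw [this, mul_assoc, hcomm2, ← mul_assoc, hcomm1, mul_assoc]
  constructor
  intro hc
  have hdvd : (Subgroup.center G).index ∣ Z.index := Subgroup.index_dvd_of_le hZle
  rw [hc] at hdvd
  exact hZfi.index_ne_zero (zero_dvd_iff.mp hdvd)

/-- Multiplying by a central element does not change commutators (right argument fixed). -/
lemma commutatorElement_mul_center (a c z : G) (hz : z ∈ Subgroup.center G) :
    ⁅a * z, c⁆ = ⁅a, c⁆ := by
  have hz1 : c * z = z * c := Subgroup.mem_center_iff.mp hz c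
  have key : z * c * z⁻¹ = c := by rw [← hz1]; group
  calc ⁅a * z, c⁆ = a * (z * c * z⁻¹) * a⁻¹ * c⁻¹ := by
        simp [commutatorElement_def, mul_inv_rev, mul_assoc]
    _ = ⁅a, c⁆ := by rw [key, commutatorElement_def]

lemma commutatorElement_center_eq (a b z w : G) (hz : z ∈ Subgroup.center G)
    (hw : w ∈ Subgroup.center G) : ⁅a * z, b * w⁆ = ⁅a, b⁆ := by
  rw [commutatorElement_mul_center a (b * w) z hz, ← commutatorElement_inv,
    commutatorElement_mul_center b a w hw, commutatorElement_inv]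

/-- If `G ⧸ Z(G)` is finite then the commutator set is finite. -/
lemma finite_commutatorSet_of_finite_quotient_center
    [Finite (G ⧸ Subgroup.center G)] : Finite (commutatorSet G) := by
  have hsub : commutatorSet G ⊆
      Set.range (fun p : (G ⧸ Subgroup.center G) × (G ⧸ Subgroup.center G) =>
        ⁅p.1.out, p.2.out⁆) := by
    rintro x ⟨a, b, rfl⟩
    refine ⟨((a : G ⧸ Subgroup.center G), (b : G ⧸ Subgroup.center G)), ?_⟩
    simp only
    have hza : ((a : G ⧸ Subgroup.center G).out)⁻¹ * a ∈ Subgroup.center G := by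
      rw [← QuotientGroup.eq]
      exact QuotientGroup.out_eq' _
    have hzb : ((b : G ⧸ Subgroup.center G).out)⁻¹ * b ∈ Subgroup.center G := by
      rw [← QuotientGroup.eq]
      exact QuotientGroup.out_eq' _
    have ha : a = (a : G ⧸ Subgroup.center G).out * (((a : G ⧸ Subgroup.center G).out)⁻¹ * a) := by
      group
    have hb : b = (b : G ⧸ Subgroup.center G).out * (((b : G ⧸ Subgroup.center G).out)⁻¹ * b) := by
      group
    conv_rhs => rw [ha, hb]
    rw [commutatorElement_center_eq _ _ _ _ hza hzb]
  exact Set.Finite.subset (Set.finite_range _) hsub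

end Aux

/-- A pseudocentral group is `BFC` (finite commutator subgroup) iff it is
central-by-finite. -/
theorem pseudocentral_commutator_finite_iff {G : Type*} [Group G] (h : P G = ⊤) :
    Finite (commutator G) ↔ Finite (G ⧸ Subgroup.center G) := by
  constructor
  · intro hf
    haveI := hf
    haveI := center_finiteIndex_of_pseudocentral h
    exact (Subgroup.center G).finite_quotient_of_finiteIndex
  · intro hf
    haveI := hf
    haveI : Finite (commutatorSet G) := finite_commutatorSet_of_finite_quotient_center
    infer_instance
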